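/- Let S be a self-dual word over {+,-,*} (S = S̄) and k a positive integer. Set P = (S**)^k S, Q = S+(S**)^{k-1}S and R = S-(S**)^{k-1}S. Then every word W over {+,-,*} with W ≥ Q and W ≥ R satisfies W ≥ P. (Consequently the cycle C((S**)^k S +) fails the path condition.) -/

import Mathlib

inductive Symb : Type
  | plus | minus | star
deriving DecidableEq


/-- the dual of a symbol: `+` ↦ `-`, `-` ↦ `+`, `*` ↦ `*` -/
def dualSym : Symb → Symb
  | Symb.plus => Symb.minus
  | Symb.minus => Symb.plus
  | Symb.star => Symb.star

/-- the dual (involution) of a word: reverse and dualize each symbol -/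
def dualWord (W : List Symb) : List Symb := (W.map dualSym).reverse

/-- the arc relation of the reflexive path `P(W)` on vertices `{0,…,|W|}` -/
def pathArc (W : List Symb) (i j : ℕ) : Prop :=
  i ≤ W.length ∧ j ≤ W.length ∧
    (i = j ∨ (j = i + 1 ∧ (W[i]? = some Symb.plus ∨ W[i]? = some Symb.star))
           ∨ (i = j + 1 ∧ (W[j]? = some Symb.minus ∨ W[j]? = some Symb.star)))

/-- `f` is an end-point preserving homomorphism from the path `P(V)` onto the path `P(U)` -/
def EPHom (V U : List Symb) (f : ℕ → ℕ) : Prop :=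
  f 0 = 0 ∧ f V.length = U.length ∧
  (∀ i j, pathArc V i j → pathArc U (f i) (f j)) ∧
  (∀ m, m ≤ U.length → ∃ i, i ≤ V.length ∧ f i = m)

/-- the order on words: `U ≤ V` iff there is an end-point preserving
homomorphism from `P(V)` onto `P(U)` -/
def wle (U V : List Symb) : Prop := ∃ f, EPHom V U f

/-- `repS S k` is the word `(S**)^k S`. -/
def repS (S : List Symb) (k : ℕ) : List Symb :=
  (List.replicate k (S ++ [Symb.star, Symb.star])).flatten ++ S

section Aux

/-- numeric consequences of an arc -/
private lemma pa_bounds {U : List Symb} {u v : ℕ} (h : pathArc U u v) :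
    u ≤ U.length ∧ v ≤ U.length ∧ u ≤ v + 1 ∧ v ≤ u + 1 := by
  obtain ⟨h1, h2, h3⟩ := h
  refine ⟨h1, h2, ?_, ?_⟩ <;> rcases h3 with h | ⟨h, -⟩ | ⟨h, -⟩ <;> omega

/-- between consecutive vertices of a path there is always an arc in some direction -/
private lemma arc_exists {W : List Symb} {t : ℕ} (ht : t < W.length) :
    pathArc W t (t + 1) ∨ pathArc W (t + 1) t := by
  have hg : W[t]? = some W[t] := List.getElem?_eq_getElem ht
  cases hw : W[t] with
  | plus => exact Or.inl ⟨by omega, ht, Or.inr (Or.inl ⟨rfl, Or.inl (by rw [hg, hw])⟩)⟩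
  | minus => exact Or.inr ⟨ht, by omega, Or.inr (Or.inr ⟨rfl, Or.inl (by rw [hg, hw])⟩)⟩
  | star => exact Or.inl ⟨by omega, ht, Or.inr (Or.inl ⟨rfl, Or.inr (by rw [hg, hw])⟩)⟩

private lemma get_mid (S T : List Symb) (c : Symb) :
    (S ++ c :: T)[S.length]? = some c := by
  rw [List.getElem?_append_right (le_refl S.length)]
  simp

private lemma get_P_mid1 (S T : List Symb) :
    (S ++ Symb.star :: Symb.star :: T)[S.length]? = some Symb.star := by
  rw [List.getElem?_append_right (le_refl S.length)]
  simp

private lemma get_P_mid2 (S T : List Symb) :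
    (S ++ Symb.star :: Symb.star :: T)[S.length + 1]? = some Symb.star := by
  rw [List.getElem?_append_right (by omega : S.length ≤ S.length + 1)]
  have h1 : S.length + 1 - S.length = 1 := by omega
  rw [h1]
  simp

private lemma get_P_low (S T : List Symb) (c : Symb) {u : ℕ} (h : u < S.length) :
    (S ++ Symb.star :: Symb.star :: T)[u]? = (S ++ c :: T)[u]? := by
  rw [List.getElem?_append_left h, List.getElem?_append_left h]

private lemma get_P_shift (S T : List Symb) (c : Symb) {u : ℕ} (h : S.length + 1 ≤ u) :
    (S ++ Symb.star :: Symb.star :: T)[u + 1]? = (S ++ c :: T)[u]? := by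
  obtain ⟨x, rfl⟩ : ∃ x, u = S.length + 1 + x := ⟨u - (S.length + 1), by omega⟩
  rw [List.getElem?_append_right (by omega : S.length ≤ S.length + 1 + x + 1)]
  rw [List.getElem?_append_right (by omega : S.length ≤ S.length + 1 + x)]
  have e1 : S.length + 1 + x + 1 - S.length = x + 2 := by omega
  have e2 : S.length + 1 + x - S.length = x + 1 := by omega
  rw [e1, e2, List.getElem?_cons_succ, List.getElem?_cons_succ, List.getElem?_cons_succ]

/-- `min (φ ·) (|S|+1)` maps `(S c T)`-arcs to `(S ** T)`-arcs -/
private lemma minArc {S T : List Symb} {c : Symb} {u v : ℕ}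
    (h : pathArc (S ++ c :: T) u v) :
    pathArc (S ++ Symb.star :: Symb.star :: T)
      (min u (S.length + 1)) (min v (S.length + 1)) := by
  obtain ⟨hu, hv, htri⟩ := h
  have hlq : (S ++ c :: T).length = S.length + T.length + 1 := by
    simp only [List.length_append, List.length_cons]; omega
  have hlp : (S ++ Symb.star :: Symb.star :: T).length = S.length + T.length + 2 := by
    simp only [List.length_append, List.length_cons]; omega
  rw [hlq] at hu hv
  refine ⟨by omega, by omega, ?_⟩
  rcases htri with heq | ⟨hj, hsym⟩ | ⟨hi, hsym⟩
  · left; omega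
  · rcases Nat.lt_or_ge u (S.length + 1) with hK | hK
    · have e1 : min u (S.length + 1) = u := by omega
      have e2 : min v (S.length + 1) = u + 1 := by omega
      rw [e1, e2]
      refine Or.inr (Or.inl ⟨rfl, ?_⟩)
      rcases Nat.lt_or_ge u S.length with hn | hn
      · rw [get_P_low S T c hn]; exact hsym
      · have hun : u = S.length := by omega
        rw [hun]
        exact Or.inr (get_P_mid1 S T)
    · left; omega
  · rcases Nat.lt_or_ge v (S.length + 1) with hK | hK
    · have e1 : min v (S.length + 1) = v := by omega
      have e2 : min u (S.length + 1) = v + 1 := by omega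
      rw [e1, e2]
      refine Or.inr (Or.inr ⟨rfl, ?_⟩)
      rcases Nat.lt_or_ge v S.length with hn | hn
      · rw [get_P_low S T c hn]; exact hsym
      · have hvn : v = S.length := by omega
        rw [hvn]
        exact Or.inr (get_P_mid1 S T)
    · left; omega

/-- `max (ψ · + 1) (|S|+1)` maps `(S c T)`-arcs to `(S ** T)`-arcs -/
private lemma maxArc {S T : List Symb} {c : Symb} {u v : ℕ}
    (h : pathArc (S ++ c :: T) u v) :
    pathArc (S ++ Symb.star :: Symb.star :: T)
      (max (u + 1) (S.length + 1)) (max (v + 1) (S.length + 1)) := by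
  obtain ⟨hu, hv, htri⟩ := h
  have hlq : (S ++ c :: T).length = S.length + T.length + 1 := by
    simp only [List.length_append, List.length_cons]; omega
  have hlp : (S ++ Symb.star :: Symb.star :: T).length = S.length + T.length + 2 := by
    simp only [List.length_append, List.length_cons]; omega
  rw [hlq] at hu hv
  refine ⟨by omega, by omega, ?_⟩
  rcases htri with heq | ⟨hj, hsym⟩ | ⟨hi, hsym⟩
  · left; omega
  · rcases Nat.lt_or_ge u (S.length + 1) with hK | hK
    · rcases Nat.lt_or_ge u S.length with hn | hn
      · left; omega
      · have hun : u = S.length := by omega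
        have e1 : max (u + 1) (S.length + 1) = S.length + 1 := by omega
        have e2 : max (v + 1) (S.length + 1) = S.length + 2 := by omega
        rw [e1, e2]
        exact Or.inr (Or.inl ⟨rfl, Or.inr (get_P_mid2 S T)⟩)
    · have e1 : max (u + 1) (S.length + 1) = u + 1 := by omega
      have e2 : max (v + 1) (S.length + 1) = u + 2 := by omega
      rw [e1, e2]
      refine Or.inr (Or.inl ⟨rfl, ?_⟩)
      rw [get_P_shift S T c hK]
      exact hsym
  · rcases Nat.lt_or_ge v (S.length + 1) with hK | hK
    · rcases Nat.lt_or_ge v S.length with hn | hn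
      · left; omega
      · have hvn : v = S.length := by omega
        have e1 : max (v + 1) (S.length + 1) = S.length + 1 := by omega
        have e2 : max (u + 1) (S.length + 1) = S.length + 2 := by omega
        rw [e1, e2]
        exact Or.inr (Or.inr ⟨rfl, Or.inr (get_P_mid2 S T)⟩)
    · have e1 : max (v + 1) (S.length + 1) = v + 1 := by omega
      have e2 : max (u + 1) (S.length + 1) = v + 2 := by omega
      rw [e1, e2]
      refine Or.inr (Or.inr ⟨rfl, ?_⟩)
      rw [get_P_shift S T c hK]
      exact hsym

/-- Gluing the two half-walks at a point `t0` where `φ` is already on the right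
and `ψ` is still on the left yields a hom onto `P(S ** T)`. -/
private lemma glue {S T W : List Symb} {c d : Symb} {φ ψ : ℕ → ℕ}
    (hφ : EPHom W (S ++ c :: T) φ) (hψ : EPHom W (S ++ d :: T) ψ)
    {t0 : ℕ} (ht0 : t0 ≤ W.length)
    (h1 : S.length + 1 ≤ φ t0) (h2 : ψ t0 ≤ S.length) :
    wle (S ++ Symb.star :: Symb.star :: T) W := by
  obtain ⟨hφ0, hφL, hφarc, -⟩ := hφ
  obtain ⟨hψ0, hψL, hψarc, -⟩ := hψ
  have hlq : (S ++ d :: T).length = S.length + T.length + 1 := by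
    simp only [List.length_append, List.length_cons]; omega
  have hlp : (S ++ Symb.star :: Symb.star :: T).length = S.length + T.length + 2 := by
    simp only [List.length_append, List.length_cons]; omega
  have hψLv : ψ W.length = S.length + T.length + 1 := by rw [hψL, hlq]
  have ht0L : t0 < W.length := by
    rcases Nat.lt_or_ge t0 W.length with h | h
    · exact h
    · exfalso
      have he : t0 = W.length := by omega
      rw [he, hψLv] at h2; omega
  set h : ℕ → ℕ := fun t =>
    if t ≤ t0 then min (φ t) (S.length + 1) else max (ψ t + 1) (S.length + 1) with hh
  have hv1 : ∀ t, t ≤ t0 → h t = min (φ t) (S.length + 1) := by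
    intro t htt; simp only [hh]; rw [if_pos htt]
  have hv2 : ∀ t, ¬ t ≤ t0 → h t = max (ψ t + 1) (S.length + 1) := by
    intro t htt; simp only [hh]; rw [if_neg htt]
  have hh0 : h 0 = 0 := by
    rw [hv1 0 (Nat.zero_le t0), hφ0]; omega
  have hhL : h W.length = (S ++ Symb.star :: Symb.star :: T).length := by
    rw [hv2 W.length (by omega), hψLv, hlp]; omega
  have harc : ∀ i j, pathArc W i j →
      pathArc (S ++ Symb.star :: Symb.star :: T) (h i) (h j) := by
    intro i j hij
    have hQφ := hφarc i j hij
    have hQψ := hψarc i j hij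
    obtain ⟨hiW, hjW, htri⟩ := hij
    by_cases hi : i ≤ t0 <;> by_cases hj : j ≤ t0
    · rw [hv1 i hi, hv1 j hj]; exact minArc hQφ
    · -- i ≤ t0 < j
      have hb := pa_bounds hQψ
      rcases htri with e | ⟨e, -⟩ | ⟨e, -⟩
      · omega
      · have hit0 : i = t0 := by omega
        subst hit0
        rw [hv1 i le_rfl, hv2 j (by omega)]
        have hm1 : min (φ i) (S.length + 1) = S.length + 1 := by omega
        rw [hm1]
        rcases Nat.lt_or_ge (ψ j + 1) (S.length + 2) with hc | hc
        · have hm2 : max (ψ j + 1) (S.length + 1) = S.length + 1 := by omega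
          rw [hm2]
          exact ⟨by omega, by omega, Or.inl rfl⟩
        · have hm2 : max (ψ j + 1) (S.length + 1) = S.length + 2 := by omega
          rw [hm2]
          exact ⟨by omega, by omega, Or.inr (Or.inl ⟨rfl, Or.inr (get_P_mid2 S T)⟩)⟩
      · omega
    · -- j ≤ t0 < i
      have hb := pa_bounds hQψ
      rcases htri with e | ⟨e, -⟩ | ⟨e, -⟩
      · omega
      · omega
      · have hjt0 : j = t0 := by omega
        subst hjt0
        rw [hv2 i (by omega), hv1 j le_rfl]
        have hm1 : min (φ j) (S.length + 1) = S.length + 1 := by omega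
        rw [hm1]
        rcases Nat.lt_or_ge (ψ i + 1) (S.length + 2) with hc | hc
        · have hm2 : max (ψ i + 1) (S.length + 1) = S.length + 1 := by omega
          rw [hm2]
          exact ⟨by omega, by omega, Or.inl rfl⟩
        · have hm2 : max (ψ i + 1) (S.length + 1) = S.length + 2 := by omega
          rw [hm2]
          exact ⟨by omega, by omega, Or.inr (Or.inr ⟨rfl, Or.inr (get_P_mid2 S T)⟩)⟩
    · rw [hv2 i hi, hv2 j hj]; exact maxArc hQψ
  refine ⟨h, hh0, hhL, harc, ?_⟩
  -- surjectivity by a discrete intermediate value argument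
  have hstep : ∀ t, t < W.length → h (t + 1) ≤ h t + 1 := by
    intro t ht
    rcases arc_exists ht with ha | ha
    · have := pa_bounds (harc _ _ ha); omega
    · have := pa_bounds (harc _ _ ha); omega
  intro m hm
  have h0m : h 0 ≤ m := by omega
  have hPi : h (Nat.findGreatest (fun i => h i ≤ m) W.length) ≤ m :=
    Nat.findGreatest_spec (P := fun i => h i ≤ m) (Nat.zero_le W.length) h0m
  have hiL : Nat.findGreatest (fun i => h i ≤ m) W.length ≤ W.length :=
    Nat.findGreatest_le W.length
  rcases Nat.lt_or_ge (Nat.findGreatest (fun i => h i ≤ m) W.length) W.length with hlt | hge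
  · have hng : ¬ h (Nat.findGreatest (fun i => h i ≤ m) W.length + 1) ≤ m :=
      Nat.findGreatest_is_greatest (P := fun i => h i ≤ m)
        (Nat.lt_succ_self _) (by omega)
    have hs := hstep _ hlt
    exact ⟨Nat.findGreatest (fun i => h i ≤ m) W.length, hiL, by omega⟩
  · have he : Nat.findGreatest (fun i => h i ≤ m) W.length = W.length := by omega
    rw [he, hhL] at hPi
    exact ⟨W.length, le_rfl, by rw [hhL]; omega⟩

end Aux

/-- For `S` self-dual and `k ≥ 1`, any word `W` with `W ≥ S+(S**)^{k-1}S` and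
`W ≥ S-(S**)^{k-1}S` also satisfies `W ≥ (S**)^k S`; hence the cycle
`C((S**)^k S +)` fails the path condition. -/
theorem stmt_19 (S : List Symb) (hS : dualWord S = S) (k : ℕ) (hk : 1 ≤ k)
    (W : List Symb)
    (hQ : wle (S ++ Symb.plus :: repS S (k - 1)) W)
    (hR : wle (S ++ Symb.minus :: repS S (k - 1)) W) :
    wle (repS S k) W := by
  obtain ⟨k', rfl⟩ : ∃ k', k = k' + 1 := ⟨k - 1, by omega⟩
  have hd : repS S (k' + 1) = S ++ Symb.star :: Symb.star :: repS S k' := by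
    simp [repS, List.replicate_succ, List.flatten_cons, List.append_assoc]
  rw [hd]
  simp only [Nat.add_sub_cancel] at hQ hR
  obtain ⟨f, hf⟩ := hQ
  obtain ⟨g, hg⟩ := hR
  set T := repS S k' with hT
  by_cases hex : ∃ t, t ≤ W.length ∧ S.length + 1 ≤ f t ∧ g t ≤ S.length
  · obtain ⟨t0, ht0, h1, h2⟩ := hex
    exact glue hf hg ht0 h1 h2
  · push_neg at hex
    have hfLv : f W.length = S.length + T.length + 1 := by
      rw [hf.2.1]
      simp only [List.length_append, List.length_cons]; omega
    have hEx : ∃ t, S.length + 1 ≤ f t := ⟨W.length, by omega⟩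
    set t1 := Nat.find hEx with ht1def
    have ht1 : S.length + 1 ≤ f t1 := Nat.find_spec hEx
    have ht1L : t1 ≤ W.length := Nat.find_le (by omega)
    have ht10 : t1 ≠ 0 := by
      intro h0
      rw [h0, hf.1] at ht1; omega
    set t0 := t1 - 1 with ht0def
    have hft0 : f t0 ≤ S.length := by
      have := Nat.find_min hEx (show t0 < t1 by omega)
      omega
    have ht0L : t0 < W.length := by omega
    have ht01 : t0 + 1 = t1 := by omega
    have hfd : f t0 = S.length ∧ f (t0 + 1) = S.length + 1 := by
      rw [ht01]
      rcases arc_exists ht0L with ha | ha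
      · have := pa_bounds (hf.2.2.1 _ _ ha); rw [ht01] at this; omega
      · have := pa_bounds (hf.2.2.1 _ _ ha); rw [ht01] at this; omega
    have hgt1 : S.length + 1 ≤ g t1 := by
      have := hex t1 ht1L ht1; omega
    have hgt0 : S.length + 1 ≤ g t0 := by
      by_contra hcon
      push_neg at hcon
      have hgd : g t0 = S.length ∧ g (t0 + 1) = S.length + 1 := by
        rcases arc_exists ht0L with ha | ha
        · have := pa_bounds (hg.2.2.1 _ _ ha); rw [ht01] at this ⊢; omega
        · have := pa_bounds (hg.2.2.1 _ _ ha); rw [ht01] at this ⊢; omega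
      have hgs : W[t0]? = some W[t0] := List.getElem?_eq_getElem ht0L
      cases hw : W[t0] with
      | plus =>
        have ha : pathArc W t0 (t0 + 1) :=
          ⟨by omega, by omega, Or.inr (Or.inl ⟨rfl, Or.inl (by rw [hgs, hw])⟩)⟩
        obtain ⟨-, -, htri⟩ := hg.2.2.1 _ _ ha
        rcases htri with e | ⟨e, hc⟩ | ⟨e, -⟩
        · omega
        · rw [hgd.1, get_mid] at hc
          rcases hc with hc | hc <;> simp at hc
        · omega
      | minus =>
        have ha : pathArc W (t0 + 1) t0 :=
          ⟨by omega, by omega, Or.inr (Or.inr ⟨rfl, Or.inl (by rw [hgs, hw])⟩)⟩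
        obtain ⟨-, -, htri⟩ := hf.2.2.1 _ _ ha
        rcases htri with e | ⟨e, -⟩ | ⟨e, hc⟩
        · omega
        · omega
        · rw [hfd.1, get_mid] at hc
          rcases hc with hc | hc <;> simp at hc
      | star =>
        have ha : pathArc W t0 (t0 + 1) :=
          ⟨by omega, by omega, Or.inr (Or.inl ⟨rfl, Or.inr (by rw [hgs, hw])⟩)⟩
        obtain ⟨-, -, htri⟩ := hg.2.2.1 _ _ ha
        rcases htri with e | ⟨e, hc⟩ | ⟨e, -⟩
        · omega
        · rw [hgd.1, get_mid] at hc
          rcases hc with hc | hc <;> simp at hc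
        · omega
    exact glue hg hf (by omega) hgt0 hft0
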